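/- For all real numbers r > 0, α > 0, β > 0 and all t ≥ 0, the Laplace transform of the beta negative binomial distribution satisfies ∑_{z=0}^∞ e^{−tz} · BNB(z; r, α, β) = ∫₀¹ ((1−p)/(1−p·e^{−t}))^r · p^{α−1}(1−p)^{β−1}/B(α, β) dp. -/

import Mathlib

open scoped BigOperators
open MeasureTheory

/-- Rising factorial `(a)_z = a(a+1)⋯(a+z-1)`. -/
noncomputable def risingFac (a : ℝ) (z : ℕ) : ℝ := ∏ i ∈ Finset.range z, (a + i)

/-- Beta function `B(α,β) = Γ(α)Γ(β)/Γ(α+β)`. -/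
noncomputable def betaFn (a b : ℝ) : ℝ := Real.Gamma a * Real.Gamma b / Real.Gamma (a + b)

/-- Probability mass function of the beta negative binomial distribution. -/
noncomputable def BNBpmf (r α β : ℝ) (z : ℕ) : ℝ :=
  (risingFac r z / z.factorial) * (betaFn (z + α) (r + β) / betaFn α β)




lemma risingFac_pos {r : ℝ} (hr : 0 < r) (z : ℕ) : 0 < risingFac r z :=
  Finset.prod_pos fun i _ => by positivity

lemma Gamma_add_nat {r : ℝ} (hr : 0 < r) (z : ℕ) :
    Real.Gamma (r + z) = Real.Gamma r * risingFac r z := by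
  induction z with
  | zero => simp [risingFac]
  | succ n ih =>
    have h : r + ((n : ℝ) + 1) = (r + n) + 1 := by ring
    push_cast
    rw [h, Real.Gamma_add_one (by positivity : (0:ℝ) < r + n).ne', ih,
      risingFac]
    rw [show risingFac r (n+1) = (∏ i ∈ Finset.range n, (r + i)) * (r + n) from Finset.prod_range_succ _ n]
    ring

lemma hasSum_integral_of_nonneg {S : Set ℝ} (hS : MeasurableSet S) {F : ℕ → ℝ → ℝ} {g : ℝ → ℝ}
    (hFint : ∀ z, IntegrableOn (F z) S) (hFnn : ∀ z, ∀ p ∈ S, 0 ≤ F z p)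
    (hgint : IntegrableOn g S) (hsum : ∀ p ∈ S, HasSum (fun z => F z p) (g p)) :
    HasSum (fun z => ∫ p in S, F z p) (∫ p in S, g p) := by
  have hFnn' : ∀ z, 0 ≤ᵐ[volume.restrict S] F z := fun z =>
    ae_restrict_of_forall_mem hS (hFnn z)
  have hgnn : ∀ p ∈ S, 0 ≤ g p := fun p hp =>
    hasSum_le (fun z => hFnn z p hp) hasSum_zero (hsum p hp)
  have key : ∀ z, ENNReal.ofReal (∫ p in S, F z p) = ∫⁻ p in S, ENNReal.ofReal (F z p) :=
    fun z => MeasureTheory.ofReal_integral_eq_lintegral_ofReal (hFint z) (hFnn' z)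
  have hg' : ENNReal.ofReal (∫ p in S, g p) = ∫⁻ p in S, ENNReal.ofReal (g p) :=
    MeasureTheory.ofReal_integral_eq_lintegral_ofReal hgint (ae_restrict_of_forall_mem hS hgnn)
  have swap : ∫⁻ p in S, ENNReal.ofReal (g p) = ∑' z, ∫⁻ p in S, ENNReal.ofReal (F z p) := by
    rw [← MeasureTheory.lintegral_tsum (fun z => ((hFint z).aemeasurable.ennreal_ofReal))]
    refine lintegral_congr_ae ?_
    filter_upwards [ae_restrict_mem hS] with p hp
    rw [← (hsum p hp).tsum_eq,
      ← ENNReal.ofReal_tsum_of_nonneg (fun z => hFnn z p hp) (hsum p hp).summable]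
  have hne : ∑' z, ENNReal.ofReal (∫ p in S, F z p) ≠ ⊤ := by
    simp_rw [key]
    rw [← swap, ← hg']
    exact ENNReal.ofReal_ne_top
  have hsummable : Summable (fun z => ∫ p in S, F z p) := by
    refine (ENNReal.summable_toReal hne).congr fun z => ?_
    exact ENNReal.toReal_ofReal (integral_nonneg_of_ae (hFnn' z))
  have hval : ∑' z, ∫ p in S, F z p = ∫ p in S, g p := by
    have h1 : ENNReal.ofReal (∑' z, ∫ p in S, F z p) = ENNReal.ofReal (∫ p in S, g p) := by
      rw [ENNReal.ofReal_tsum_of_nonneg (fun z => integral_nonneg_of_ae (hFnn' z)) hsummable,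
        hg', swap]
      simp_rw [key]
    exact (ENNReal.ofReal_eq_ofReal_iff
      (tsum_nonneg fun z => integral_nonneg_of_ae (hFnn' z))
      (integral_nonneg_of_ae (ae_restrict_of_forall_mem hS hgnn))).mp h1
  exact hval ▸ hsummable.hasSum

lemma hasSum_binomial {r x : ℝ} (hr : 0 < r) (hx0 : 0 ≤ x) (hx1 : x < 1) :
    HasSum (fun z : ℕ => risingFac r z / z.factorial * x ^ z) ((1 - x) ^ (-r)) := by
  have hc : 0 < 1 - x := by linarith
  set F : ℕ → ℝ → ℝ :=
    fun z s => x ^ z / z.factorial * (Real.exp (-s) * s ^ ((z : ℝ) + r - 1)) with hFdef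
  set g : ℝ → ℝ := fun s => s ^ (r - 1) * Real.exp (-((1 - x) * s)) with hgdef
  have hFint : ∀ z, IntegrableOn (F z) (Set.Ioi 0) := fun z =>
    (Real.GammaIntegral_convergent (by positivity : (0:ℝ) < (z:ℝ) + r)).const_mul _
  have hFnn : ∀ z, ∀ s ∈ Set.Ioi (0:ℝ), 0 ≤ F z s := by
    intro z s hs
    have : (0:ℝ) < s := hs
    simp only [hFdef]
    positivity
  have hgint : IntegrableOn g (Set.Ioi 0) := by
    have h := integrableOn_rpow_mul_exp_neg_mul_rpow
      (by linarith : (-1:ℝ) < r - 1) zero_lt_one hc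
    refine h.congr_fun (fun s hs => ?_) measurableSet_Ioi
    beta_reduce
    rw [Real.rpow_one, neg_mul]
  have hsum : ∀ s ∈ Set.Ioi (0:ℝ), HasSum (fun z => F z s) (g s) := by
    intro s hs
    have hs0 : (0:ℝ) < s := hs
    have h1 : HasSum (fun z : ℕ => (x * s) ^ z / z.factorial) (Real.exp (x * s)) := by
      rw [Real.exp_eq_exp_ℝ]
      exact NormedSpace.expSeries_div_hasSum_exp (x * s)
    have h2 := h1.mul_left (Real.exp (-s) * s ^ (r - 1))
    have heq : (fun z : ℕ => Real.exp (-s) * s ^ (r - 1) * ((x * s) ^ z / z.factorial))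
        = fun z => F z s := by
      funext z
      simp only [hFdef]
      rw [mul_pow, show (z:ℝ) + r - 1 = (z:ℝ) + (r - 1) by ring, Real.rpow_add hs0,
        Real.rpow_natCast]
      ring
    have hval : Real.exp (-s) * s ^ (r - 1) * Real.exp (x * s) = g s := by
      simp only [hgdef]
      rw [show -((1 - x) * s) = -s + x * s by ring, Real.exp_add]
      ring
    rwa [heq, hval] at h2
  have H := hasSum_integral_of_nonneg measurableSet_Ioi hFint hFnn hgint hsum
  have hFval : ∀ z : ℕ, ∫ s in Set.Ioi (0:ℝ), F z s
      = x ^ z / (z.factorial : ℝ) * (Real.Gamma r * risingFac r z) := by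
    intro z
    simp only [hFdef]
    rw [integral_const_mul, ← Real.Gamma_eq_integral (by positivity : (0:ℝ) < (z:ℝ) + r),
      show ((z:ℝ) + r) = r + (z:ℕ) by ring, Gamma_add_nat hr]
  have hgval : ∫ s in Set.Ioi (0:ℝ), g s = (1 / (1 - x)) ^ r * Real.Gamma r := by
    simp only [hgdef]
    exact Real.integral_rpow_mul_exp_neg_mul_Ioi hr hc
  rw [funext hFval, hgval] at H
  refine (hasSum_mul_left_iff (Real.Gamma_pos_of_pos hr).ne').mp ?_
  have e1 : (fun z : ℕ => Real.Gamma r * (risingFac r z / z.factorial * x ^ z))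
      = fun z : ℕ => x ^ z / (z.factorial : ℝ) * (Real.Gamma r * risingFac r z) := by
    funext z; ring
  have e2 : Real.Gamma r * (1 - x) ^ (-r) = (1 / (1 - x)) ^ r * Real.Gamma r := by
    rw [one_div, Real.inv_rpow hc.le, ← Real.rpow_neg hc.le]
    ring
  rw [e1, e2]
  exact H




lemma beta_key {a b : ℝ} : ∀ p ∈ Set.Icc (0:ℝ) 1,
    (p:ℂ) ^ ((a:ℂ) - 1) * (1 - (p:ℂ)) ^ ((b:ℂ) - 1)
      = ((p ^ (a-1) * (1-p) ^ (b-1) : ℝ) : ℂ) := by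
  intro p hp
  rw [Complex.ofReal_mul, Complex.ofReal_cpow hp.1,
    Complex.ofReal_cpow (by linarith [hp.2] : (0:ℝ) ≤ 1 - p)]
  push_cast
  ring

lemma betaIntegrableOn {a b : ℝ} (ha : 0 < a) (hb : 0 < b) :
    IntegrableOn (fun p : ℝ => p ^ (a - 1) * (1 - p) ^ (b - 1)) (Set.Ioo 0 1) := by
  have h := Complex.betaIntegral_convergent (u := a) (v := b) (by simpa) (by simpa)
  rw [intervalIntegrable_iff_integrableOn_Ioc_of_le zero_le_one] at h
  have h2 : IntegrableOn (fun x : ℝ => (x:ℂ) ^ ((a:ℂ) - 1) * (1 - (x:ℂ)) ^ ((b:ℂ) - 1))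
      (Set.Ioo 0 1) := h.mono_set Set.Ioo_subset_Ioc_self
  have h4 : IntegrableOn (fun p : ℝ => ((p ^ (a-1) * (1-p) ^ (b-1) : ℝ) : ℂ)) (Set.Ioo 0 1) :=
    h2.congr_fun (fun p hp => beta_key p (Set.Ioo_subset_Icc_self hp)) measurableSet_Ioo
  have h5 := h4.re
  refine MeasureTheory.IntegrableOn.congr_fun h5 (fun p _ => ?_) measurableSet_Ioo
  simp [RCLike.re_to_complex]

lemma betaIntegral_real {a b : ℝ} (ha : 0 < a) (hb : 0 < b) :
    ∫ p in Set.Ioo (0:ℝ) 1, p ^ (a-1) * (1-p) ^ (b-1) = betaFn a b := by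
  have hab : Real.Gamma (a+b) ≠ 0 := (Real.Gamma_pos_of_pos (by linarith)).ne'
  have h := Complex.Gamma_mul_Gamma_eq_betaIntegral (s := a) (t := b) (by simpa) (by simpa)
  rw [Complex.betaIntegral,
    intervalIntegral.integral_congr (g := fun p : ℝ => ((p ^ (a-1) * (1-p) ^ (b-1) : ℝ) : ℂ))
      (fun p hp => beta_key p (by rwa [Set.uIcc_of_le zero_le_one] at hp)),
    intervalIntegral.integral_ofReal, intervalIntegral.integral_of_le zero_le_one,
    MeasureTheory.integral_Ioc_eq_integral_Ioo, ← Complex.ofReal_add, Complex.Gamma_ofReal,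
    Complex.Gamma_ofReal, Complex.Gamma_ofReal, ← Complex.ofReal_mul, ← Complex.ofReal_mul,
    Complex.ofReal_inj] at h
  rw [betaFn, eq_div_iff hab]
  linarith [h]


theorem stmt_17 (r α β t : ℝ) (hr : 0 < r) (hα : 0 < α) (hβ : 0 < β) (ht : 0 ≤ t) :
    HasSum (fun z : ℕ => Real.exp (-t * z) * BNBpmf r α β z)
      (∫ p in Set.Ioo (0 : ℝ) 1,
        ((1 - p) / (1 - p * Real.exp (-t))) ^ r *
          (p ^ (α - 1) * (1 - p) ^ (β - 1) / betaFn α β)) := by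
  have hB : 0 < betaFn α β := by
    rw [betaFn]; positivity
  set c : ℝ := Real.exp (-t) with hcdef
  have hc0 : 0 < c := Real.exp_pos _
  have hc1 : c ≤ 1 := Real.exp_le_one_iff.mpr (by linarith)
  set F : ℕ → ℝ → ℝ := fun z p =>
    (Real.exp (-t * z) * (risingFac r z / z.factorial) / betaFn α β)
      * (p ^ ((z : ℝ) + α - 1) * (1 - p) ^ (r + β - 1)) with hFdef
  set g : ℝ → ℝ := fun p =>
    ((1 - p) / (1 - p * c)) ^ r * (p ^ (α - 1) * (1 - p) ^ (β - 1) / betaFn α β) with hgdef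
  have hFint : ∀ z, IntegrableOn (F z) (Set.Ioo 0 1) := fun z =>
    (betaIntegrableOn (by positivity : (0:ℝ) < (z:ℝ) + α) (by positivity)).const_mul _
  have hFnn : ∀ z, ∀ p ∈ Set.Ioo (0:ℝ) 1, 0 ≤ F z p := by
    intro z p hp
    have h1 : (0:ℝ) < p := hp.1
    have h2 : p < 1 := hp.2
    have h3 : (0:ℝ) < 1 - p := by linarith
    have hrf := risingFac_pos hr z
    simp only [hFdef]
    positivity
  have hgmeas : AEStronglyMeasurable g (volume.restrict (Set.Ioo 0 1)) := by
    apply Measurable.aestronglyMeasurable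
    fun_prop
  have hpc : ∀ p ∈ Set.Ioo (0:ℝ) 1, p * c < 1 := fun p hp =>
    lt_of_le_of_lt (by nlinarith [hp.1, hp.2] : p * c ≤ p) hp.2
  have hgint : IntegrableOn g (Set.Ioo 0 1) := by
    refine Integrable.mono ((betaIntegrableOn hα hβ).div_const (betaFn α β)) hgmeas ?_
    filter_upwards [ae_restrict_mem measurableSet_Ioo] with p hp
    have h1 : (0:ℝ) < p := hp.1
    have h2 : p < 1 := hp.2
    have h3 : (0:ℝ) ≤ 1 - p := by linarith
    have h4 : (0:ℝ) < 1 - p * c := by linarith [hpc p hp]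
    have hratio : (1 - p) / (1 - p * c) ≤ 1 := by
      rw [div_le_one h4]
      nlinarith
    have hratio0 : (0:ℝ) ≤ (1 - p) / (1 - p * c) := div_nonneg h3 h4.le
    have hbase : (0:ℝ) ≤ p ^ (α - 1) * (1 - p) ^ (β - 1) / betaFn α β := by positivity
    rw [Real.norm_eq_abs, Real.norm_eq_abs, abs_of_nonneg hbase, hgdef,
      abs_of_nonneg (by positivity)]
    calc ((1 - p) / (1 - p * c)) ^ r * (p ^ (α - 1) * (1 - p) ^ (β - 1) / betaFn α β)
        ≤ 1 * (p ^ (α - 1) * (1 - p) ^ (β - 1) / betaFn α β) := by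
          apply mul_le_mul_of_nonneg_right (Real.rpow_le_one hratio0 hratio hr.le) hbase
      _ = p ^ (α - 1) * (1 - p) ^ (β - 1) / betaFn α β := one_mul _
  have hsum : ∀ p ∈ Set.Ioo (0:ℝ) 1, HasSum (fun z => F z p) (g p) := by
    intro p hp
    have h1 : (0:ℝ) < p := hp.1
    have h2 : p < 1 := hp.2
    have h3 : (0:ℝ) < 1 - p := by linarith
    have h4 : (0:ℝ) < 1 - p * c := by linarith [hpc p hp]
    have hx0 : (0:ℝ) ≤ p * c := by positivity
    have H := (hasSum_binomial hr hx0 (hpc p hp)).mul_right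
      (p ^ (α - 1) * (1 - p) ^ (r + β - 1) / betaFn α β)
    have heq : (fun z : ℕ => risingFac r z / z.factorial * (p * c) ^ z
        * (p ^ (α - 1) * (1 - p) ^ (r + β - 1) / betaFn α β)) = fun z => F z p := by
      funext z
      simp only [hFdef]
      rw [show (-t) * (z:ℝ) = (z:ℝ) * (-t) by ring, Real.exp_nat_mul, ← hcdef,
        show (z:ℝ) + α - 1 = (z:ℝ) + (α - 1) by ring, Real.rpow_add h1, Real.rpow_natCast,
        mul_pow]
      ring
    have hval : (1 - p * c) ^ (-r) * (p ^ (α - 1) * (1 - p) ^ (r + β - 1) / betaFn α β)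
        = g p := by
      simp only [hgdef]
      rw [Real.div_rpow h3.le h4.le,
        show r + β - 1 = r + (β - 1) by ring, Real.rpow_add h3, Real.rpow_neg h4.le,
        div_eq_mul_inv]
      ring
    rwa [heq, hval] at H
  have H := hasSum_integral_of_nonneg measurableSet_Ioo hFint hFnn hgint hsum
  have hFval : ∀ z : ℕ, ∫ p in Set.Ioo (0:ℝ) 1, F z p
      = Real.exp (-t * z) * BNBpmf r α β z := by
    intro z
    simp only [hFdef]
    rw [integral_const_mul, betaIntegral_real (by positivity : (0:ℝ) < (z:ℝ) + α) (by positivity),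
      BNBpmf]
    ring
  rw [funext hFval] at H
  exact H
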